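/- Let F : ℝ^d → ℝ^d be a continuous map whose graph G = {(q, F(q))} has the property that its paratingent cone at every point contains no nonzero vertical vector (i.e., no vector of the form (0, v) with v ≠ 0), and suppose G is compact (F is defined on a compact set). Then F is Lipschitz. -/

import Mathlib

open Filter

def Paratingent {V : Type*} [NormedAddCommGroup V] [NormedSpace ℝ V]
    (E : Set V) (z : V) : Set V :=
  {w | ∃ t : ℕ → ℝ, ∃ a b : ℕ → V,
    (∀ n, 0 < t n) ∧ (∀ n, a n ∈ E) ∧ (∀ n, b n ∈ E) ∧
    Tendsto a atTop (nhds z) ∧ Tendsto b atTop (nhds z) ∧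
    Tendsto (fun n => (t n)⁻¹ • (a n - b n)) atTop (nhds w)}

/-- a continuous map on a compact set whose graph has no nonzero vertical vector
in any of its paratingent cones is Lipschitz. -/
theorem stmt5 {d : ℕ} (A : Set (EuclideanSpace ℝ (Fin d))) (hA : IsCompact A)
    (F : EuclideanSpace ℝ (Fin d) → EuclideanSpace ℝ (Fin d)) (hF : ContinuousOn F A)
    (hvert : ∀ z ∈ (fun q => (q, F q)) '' A,
      ∀ v : EuclideanSpace ℝ (Fin d),
        ((0 : EuclideanSpace ℝ (Fin d)), v) ∈ Paratingent ((fun q => (q, F q)) '' A) z →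
        v = 0) :
    ∃ L : NNReal, LipschitzOnWith L F A := by
  by_contra hcon
  push_neg at hcon
  have key : ∀ n : ℕ, ∃ p ∈ A, ∃ q ∈ A, (n : ℝ) * ‖p - q‖ < ‖F p - F q‖ := by
    intro n
    have h := hcon n
    rw [lipschitzOnWith_iff_norm_sub_le] at h
    push_neg at h
    obtain ⟨p, hp, q, hq, h⟩ := h
    refine ⟨p, hp, q, hq, ?_⟩
    have : ((n : NNReal) : ℝ) = (n : ℝ) := by norm_cast
    linarith [this ▸ h]
  choose p hp q hq hlt using key
  set t : ℕ → ℝ := fun n => ‖F (p n) - F (q n)‖ with ht_def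
  have ht : ∀ n, 0 < t n := fun n =>
    lt_of_le_of_lt (mul_nonneg (Nat.cast_nonneg n) (norm_nonneg _)) (hlt n)
  -- boundedness of F on A
  obtain ⟨C, hC⟩ := hA.exists_bound_of_continuousOn hF
  have htC : ∀ n, t n ≤ 2 * C := by
    intro n
    calc t n ≤ ‖F (p n)‖ + ‖F (q n)‖ := norm_sub_le _ _
    _ ≤ 2 * C := by linarith [hC (p n) (hp n), hC (q n) (hq n)]
  -- p n - q n → 0
  have hdiff : Tendsto (fun n => p n - q n) atTop (nhds 0) := by
    apply squeeze_zero_norm' (a := fun n : ℕ => 2 * C / n)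
    · filter_upwards [eventually_ge_atTop 1] with n hn
      have hn' : (1 : ℝ) ≤ (n : ℝ) := by exact_mod_cast hn
      have h1 : (n : ℝ) * ‖p n - q n‖ ≤ 2 * C := le_trans (hlt n).le (htC n)
      rw [div_eq_inv_mul, ← mul_le_mul_iff_right₀ (show (0:ℝ) < n by linarith)]
      calc (n:ℝ) * ‖p n - q n‖ ≤ 2 * C := h1
      _ = (n:ℝ) * ((n:ℝ)⁻¹ * (2 * C)) := by
          field_simp
    · exact tendsto_const_div_atTop_nhds_zero_nat (2 * C)
  -- first subsequence: p converges
  obtain ⟨z₀, hz₀, φ, hφ, hpφ⟩ := hA.tendsto_subseq hp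
  -- second subsequence: normalized difference converges on the sphere
  set u : ℕ → EuclideanSpace ℝ (Fin d) := fun n => (t n)⁻¹ • (F (p n) - F (q n)) with hu_def
  have hu_sphere : ∀ n, u (φ n) ∈ Metric.sphere (0 : EuclideanSpace ℝ (Fin d)) 1 := by
    intro n
    rw [mem_sphere_zero_iff_norm, hu_def, norm_smul, norm_inv, Real.norm_eq_abs,
      abs_of_pos (ht (φ n))]
    exact inv_mul_cancel₀ (ht (φ n)).ne'
  obtain ⟨v, hv, ψ, hψ, huv⟩ :=
    (isCompact_sphere (0 : EuclideanSpace ℝ (Fin d)) 1).tendsto_subseq hu_sphere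
  have hvnorm : ‖v‖ = 1 := mem_sphere_zero_iff_norm.mp hv
  set σ : ℕ → ℕ := fun n => φ (ψ n) with hσ_def
  have hσ : StrictMono σ := hφ.comp hψ
  have hσ_le : ∀ n, n ≤ σ n := fun n => hσ.id_le n
  -- limits along σ
  have hpσ : Tendsto (fun n => p (σ n)) atTop (nhds z₀) := hpφ.comp hψ.tendsto_atTop
  have hdσ : Tendsto (fun n => p (σ n) - q (σ n)) atTop (nhds 0) :=
    hdiff.comp (hσ.tendsto_atTop)
  have hqσ : Tendsto (fun n => q (σ n)) atTop (nhds z₀) := by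
    have := hpσ.sub hdσ
    simpa using this
  have hFz : Tendsto F (nhdsWithin z₀ A) (nhds (F z₀)) := hF z₀ hz₀
  have hpin : Tendsto (fun n => p (σ n)) atTop (nhdsWithin z₀ A) :=
    tendsto_nhdsWithin_iff.mpr ⟨hpσ, Eventually.of_forall fun n => hp _⟩
  have hqin : Tendsto (fun n => q (σ n)) atTop (nhdsWithin z₀ A) :=
    tendsto_nhdsWithin_iff.mpr ⟨hqσ, Eventually.of_forall fun n => hq _⟩
  have hFpσ : Tendsto (fun n => F (p (σ n))) atTop (nhds (F z₀)) := hFz.comp hpin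
  have hFqσ : Tendsto (fun n => F (q (σ n))) atTop (nhds (F z₀)) := hFz.comp hqin
  -- the first component of the normalized differences tends to 0
  have hfirst : Tendsto (fun n => (t (σ n))⁻¹ • (p (σ n) - q (σ n))) atTop
      (nhds (0 : EuclideanSpace ℝ (Fin d))) := by
    apply squeeze_zero_norm' (a := fun n : ℕ => 1 / n)
    · filter_upwards [eventually_ge_atTop 1] with n hn
      have hn1 : (1 : ℝ) ≤ (n : ℝ) := by exact_mod_cast hn
      have hmn : (n : ℝ) ≤ (σ n : ℝ) := by exact_mod_cast hσ_le n
      have h1 : (n : ℝ) * ‖p (σ n) - q (σ n)‖ ≤ t (σ n) := by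
        calc (n : ℝ) * ‖p (σ n) - q (σ n)‖ ≤ (σ n : ℝ) * ‖p (σ n) - q (σ n)‖ :=
          mul_le_mul_of_nonneg_right hmn (norm_nonneg _)
        _ ≤ t (σ n) := (hlt (σ n)).le
      rw [norm_smul, norm_inv, Real.norm_eq_abs, abs_of_pos (ht (σ n))]
      calc (t (σ n))⁻¹ * ‖p (σ n) - q (σ n)‖ ≤ (t (σ n))⁻¹ * (t (σ n) / n) := by
            refine mul_le_mul_of_nonneg_left ?_ (inv_nonneg.mpr (ht _).le)
            rw [le_div_iff₀ (by linarith : (0:ℝ) < n), mul_comm]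
            exact h1
      _ = 1 / n := by
            rw [← mul_div_assoc, inv_mul_cancel₀ (ht (σ n)).ne']
    · exact tendsto_one_div_atTop_nhds_zero_nat
  have huσ : Tendsto (fun n => u (σ n)) atTop (nhds v) := huv
  -- assemble the paratingent witness
  have hmem : ((0 : EuclideanSpace ℝ (Fin d)), v) ∈
      Paratingent ((fun q => (q, F q)) '' A) (z₀, F z₀) := by
    refine ⟨fun n => t (σ n), fun n => (p (σ n), F (p (σ n))),
      fun n => (q (σ n), F (q (σ n))), fun n => ht (σ n),
      fun n => ⟨p (σ n), hp _, rfl⟩, fun n => ⟨q (σ n), hq _, rfl⟩,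
      hpσ.prodMk_nhds hFpσ, hqσ.prodMk_nhds hFqσ, ?_⟩
    have : (fun n => (t (σ n))⁻¹ • ((p (σ n), F (p (σ n))) - (q (σ n), F (q (σ n)))))
        = fun n => ((t (σ n))⁻¹ • (p (σ n) - q (σ n)), u (σ n)) := by
      funext n
      simp [hu_def, Prod.smul_mk, Prod.mk_sub_mk]
    rw [this]
    exact hfirst.prodMk_nhds huσ
  have := hvert (z₀, F z₀) ⟨z₀, hz₀, rfl⟩ v hmem
  rw [this, norm_zero] at hvnorm
  exact one_ne_zero hvnorm.symm
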